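/- Assume F : π → Matrix (Fin n) (Fin n) ℂ is bounded and satisfies condition (1.4) (there exist a finite set S ⊆ π and C > 0 such that for every g ∉ S the matrix F g is invertible and ‖(F g)⁻¹‖ ≤ C) and condition (1.5) (for every h ∈ π and ε > 0 the set {g ∈ π | ‖F (h*g) − F g‖ ≥ ε} is finite). Then for every m ∈ ℕ, every h₀, …, h_m ∈ π, and every λ₀, …, λ_m ∈ ℝ with λ_k ≥ 0 and Σ_k λ_k = 1, the convex combination Φ_x = Σ_{k=0}^{m} λ_k • (L_{h_k} ∘ Φ_F ∘ L_{h_k}⁻¹) differs from Φ_F by a compact operator, and consequently Φ_x is invertible modulo compact operators (a Fredholm operator). -/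

import Mathlib

open scoped Matrix.Norms.L2Operator
open scoped ENNReal

namespace CCFAux

variable {π : Type*} [Group π] {n : ℕ}

local notation "H" => lp (fun _ : π => EuclideanSpace ℂ (Fin n)) 2

/-- `mulVec`, bundled as a map into Euclidean space. -/
noncomputable def mv (A : Matrix (Fin n) (Fin n) ℂ) (v : EuclideanSpace ℂ (Fin n)) :
    EuclideanSpace ℂ (Fin n) :=
  (EuclideanSpace.equiv (Fin n) ℂ).symm (A.mulVec v)

lemma mv_eq (A : Matrix (Fin n) (Fin n) ℂ) (v : EuclideanSpace ℂ (Fin n)) :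
    mv A v = A.mulVec v := rfl

lemma norm_mv_le (A : Matrix (Fin n) (Fin n) ℂ) (v : EuclideanSpace ℂ (Fin n)) :
    ‖mv A v‖ ≤ ‖A‖ * ‖v‖ :=
  A.l2_opNorm_mulVec v

lemma memℓp_mulVec (G : π → Matrix (Fin n) (Fin n) ℂ) {C : ℝ} (hC : ∀ g, ‖G g‖ ≤ C)
    (ξ : H) :
    Memℓp (fun g : π => mv (G g) (ξ g)) 2 := by
  have hC0 : 0 ≤ C := le_trans (norm_nonneg _) (hC 1)
  apply memℓp_gen
  have hsum : Summable fun g : π => C ^ (2 : ℝ≥0∞).toReal * ‖ξ g‖ ^ (2 : ℝ≥0∞).toReal :=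
    ((lp.memℓp ξ).summable (by norm_num)).mul_left _
  refine Summable.of_nonneg_of_le (fun g => Real.rpow_nonneg (norm_nonneg _) _)
    (fun g => ?_) hsum
  calc ‖mv (G g) (ξ g)‖ ^ (2 : ℝ≥0∞).toReal
      ≤ (C * ‖ξ g‖) ^ (2 : ℝ≥0∞).toReal := by
        apply Real.rpow_le_rpow (norm_nonneg _)
        · exact le_trans (norm_mv_le _ _)
            (mul_le_mul_of_nonneg_right (hC g) (norm_nonneg _))
        · positivity
    _ = C ^ (2 : ℝ≥0∞).toReal * ‖ξ g‖ ^ (2 : ℝ≥0∞).toReal :=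
        Real.mul_rpow hC0 (norm_nonneg _)

/-- The multiplication operator. -/
noncomputable def mulOp (G : π → Matrix (Fin n) (Fin n) ℂ) (C : ℝ) (hC : ∀ g, ‖G g‖ ≤ C) :
    H →L[ℂ] H :=
  LinearMap.mkContinuous
    { toFun := fun ξ =>
        (⟨fun g => mv (G g) (ξ g), by exact memℓp_mulVec G hC ξ⟩ : H)
      map_add' := fun ξ η => by
        apply lp.ext; funext g
        show mv (G g) ((ξ + η) g) = _
        rw [lp.coeFn_add]
        show mv (G g) (ξ g + η g) = _
        show (EuclideanSpace.equiv (Fin n) ℂ).symm ((G g).mulVec (WithLp.ofLp (ξ g) + WithLp.ofLp (η g))) = _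
        rw [Matrix.mulVec_add]
        rfl
      map_smul' := fun c ξ => by
        apply lp.ext; funext g
        show mv (G g) ((c • ξ) g) = _
        rw [lp.coeFn_smul]
        show (EuclideanSpace.equiv (Fin n) ℂ).symm ((G g).mulVec (c • WithLp.ofLp (ξ g))) = _
        rw [Matrix.mulVec_smul]
        rfl }
    C (fun ξ => by
      have hC0 : 0 ≤ C := le_trans (norm_nonneg _) (hC 1)
      apply lp.norm_le_of_forall_sum_le (by norm_num) (mul_nonneg hC0 (norm_nonneg _))
      intro s
      have hr : (0:ℝ) < (2 : ℝ≥0∞).toReal := by norm_num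
      calc ∑ g ∈ s, ‖mv (G g) (ξ g)‖ ^ (2 : ℝ≥0∞).toReal
          ≤ ∑ g ∈ s, C ^ (2 : ℝ≥0∞).toReal * ‖ξ g‖ ^ (2 : ℝ≥0∞).toReal := by
            refine Finset.sum_le_sum (fun g _ => ?_)
            rw [← Real.mul_rpow hC0 (norm_nonneg _)]
            apply Real.rpow_le_rpow (norm_nonneg _) _ hr.le
            exact le_trans (norm_mv_le _ _)
              (mul_le_mul_of_nonneg_right (hC g) (norm_nonneg _))
        _ = C ^ (2 : ℝ≥0∞).toReal * ∑ g ∈ s, ‖ξ g‖ ^ (2 : ℝ≥0∞).toReal := by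
            rw [Finset.mul_sum]
        _ ≤ C ^ (2 : ℝ≥0∞).toReal * ‖ξ‖ ^ (2 : ℝ≥0∞).toReal := by
            refine mul_le_mul_of_nonneg_left (lp.sum_rpow_le_norm_rpow hr ξ s) ?_
            exact Real.rpow_nonneg hC0 _
        _ = (C * ‖ξ‖) ^ (2 : ℝ≥0∞).toReal :=
            (Real.mul_rpow hC0 (norm_nonneg _)).symm)

@[simp] lemma mulOp_apply (G : π → Matrix (Fin n) (Fin n) ℂ) (C : ℝ) (hC : ∀ g, ‖G g‖ ≤ C)
    (ξ : H) (g : π) : mulOp G C hC ξ g = (G g).mulVec (ξ g) := rfl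

lemma eq_mulOp {T : H →L[ℂ] H} {G : π → Matrix (Fin n) (Fin n) ℂ} {C : ℝ}
    {hC : ∀ g, ‖G g‖ ≤ C} (h : ∀ (ξ : H) (g : π), T ξ g = (G g).mulVec (ξ g)) :
    T = mulOp G C hC :=
  ContinuousLinearMap.ext fun ξ => lp.ext (funext fun g => WithLp.ofLp_injective 2 (h ξ g))

lemma mulOp_opNorm_le (G : π → Matrix (Fin n) (Fin n) ℂ) (C : ℝ) (hC : ∀ g, ‖G g‖ ≤ C)
    {C' : ℝ} (hC0' : 0 ≤ C') (hC' : ∀ g, ‖G g‖ ≤ C') :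
    ‖mulOp G C hC‖ ≤ C' := by
  refine ContinuousLinearMap.opNorm_le_bound _ hC0' (fun ξ => ?_)
  apply lp.norm_le_of_forall_sum_le (by norm_num) (mul_nonneg hC0' (norm_nonneg _))
  intro s
  have hr : (0:ℝ) < (2 : ℝ≥0∞).toReal := by norm_num
  calc ∑ g ∈ s, ‖(mulOp G C hC ξ) g‖ ^ (2 : ℝ≥0∞).toReal
      = ∑ g ∈ s, ‖mv (G g) (ξ g)‖ ^ (2 : ℝ≥0∞).toReal := rfl
    _ ≤ ∑ g ∈ s, C' ^ (2 : ℝ≥0∞).toReal * ‖ξ g‖ ^ (2 : ℝ≥0∞).toReal := by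
        refine Finset.sum_le_sum (fun g _ => ?_)
        rw [← Real.mul_rpow hC0' (norm_nonneg _)]
        apply Real.rpow_le_rpow (norm_nonneg _) _ hr.le
        exact le_trans (norm_mv_le _ _)
          (mul_le_mul_of_nonneg_right (hC' g) (norm_nonneg _))
    _ = C' ^ (2 : ℝ≥0∞).toReal * ∑ g ∈ s, ‖ξ g‖ ^ (2 : ℝ≥0∞).toReal := by
        rw [Finset.mul_sum]
    _ ≤ C' ^ (2 : ℝ≥0∞).toReal * ‖ξ‖ ^ (2 : ℝ≥0∞).toReal := by
        refine mul_le_mul_of_nonneg_left (lp.sum_rpow_le_norm_rpow hr ξ s) ?_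
        exact Real.rpow_nonneg hC0' _
    _ = (C' * ‖ξ‖) ^ (2 : ℝ≥0∞).toReal := (Real.mul_rpow hC0' (norm_nonneg _)).symm



noncomputable def singleCLM [DecidableEq π] (t : π) : EuclideanSpace ℂ (Fin n) →L[ℂ] H :=
  LinearMap.mkContinuous
    { toFun := fun a => lp.single 2 t a
      map_add' := fun a b => by
        apply lp.ext; funext j
        rw [lp.coeFn_add, Pi.add_apply]
        by_cases hj : j = t
        · subst hj
          rw [lp.single_apply_self, lp.single_apply_self, lp.single_apply_self]
        · rw [lp.single_apply_ne 2 t _ hj, lp.single_apply_ne 2 t _ hj,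
            lp.single_apply_ne 2 t _ hj, add_zero]
      map_smul' := fun c a => by
        simp only [RingHom.id_apply]
        exact lp.single_smul (E := fun _ : π => EuclideanSpace ℂ (Fin n)) 2 t c a }
    1 (fun a => by
      rw [one_mul]
      exact le_of_eq (lp.norm_single (E := fun _ : π => EuclideanSpace ℂ (Fin n)) (p := 2) (by norm_num) t a))

@[simp] lemma singleCLM_apply [DecidableEq π] (t : π) (a : EuclideanSpace ℂ (Fin n)) :
    singleCLM t a = lp.single 2 t a := rfl

noncomputable def evalCLM (t : π) : H →L[ℂ] EuclideanSpace ℂ (Fin n) :=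
  LinearMap.mkContinuous
    { toFun := fun ξ => ξ t
      map_add' := fun ξ η => congrFun (lp.coeFn_add ξ η) t
      map_smul' := fun c ξ => congrFun (lp.coeFn_smul c ξ) t }
    1 (fun ξ => by
      rw [one_mul]
      exact lp.norm_apply_le_norm (by norm_num) ξ t)

@[simp] lemma evalCLM_apply (t : π) (ξ : H) : evalCLM t ξ = ξ t := rfl

noncomputable def matCLM (A : Matrix (Fin n) (Fin n) ℂ) :
    EuclideanSpace ℂ (Fin n) →L[ℂ] EuclideanSpace ℂ (Fin n) :=
  LinearMap.mkContinuous
    { toFun := fun v => (EuclideanSpace.equiv (Fin n) ℂ).symm (A.mulVec v)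
      map_add' := fun v w => by
        show (EuclideanSpace.equiv (Fin n) ℂ).symm (A.mulVec (v + w)) = _
        rw [Matrix.mulVec_add]; rfl
      map_smul' := fun c v => by
        show (EuclideanSpace.equiv (Fin n) ℂ).symm (A.mulVec (c • v)) = _
        rw [Matrix.mulVec_smul]; rfl }
    ‖A‖ (fun v => A.l2_opNorm_mulVec v)

@[simp] lemma matCLM_apply (A : Matrix (Fin n) (Fin n) ℂ) (v : EuclideanSpace ℂ (Fin n)) :
    matCLM A v = A.mulVec v := rfl



lemma isCompactOperator_of_finiteDimensional {X Y : Type*} [NormedAddCommGroup X]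
    [NormedSpace ℂ X] [NormedAddCommGroup Y] [NormedSpace ℂ Y] [FiniteDimensional ℂ Y]
    (f : X →L[ℂ] Y) : IsCompactOperator f := by
  refine ⟨Metric.closedBall 0 ‖f‖, isCompact_closedBall 0 ‖f‖, ?_⟩
  filter_upwards [Metric.closedBall_mem_nhds (0 : X) one_pos] with x hx
  simp only [Metric.mem_closedBall, dist_zero_right] at hx
  show f x ∈ Metric.closedBall 0 ‖f‖
  simp only [Metric.mem_closedBall, dist_zero_right]
  calc ‖f x‖ ≤ ‖f‖ * ‖x‖ := f.le_opNorm x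
    _ ≤ ‖f‖ * 1 := mul_le_mul_of_nonneg_left hx (norm_nonneg _)
    _ = ‖f‖ := mul_one _

lemma isCompactOperator_sum {ι X Y : Type*} [NormedAddCommGroup X] [NormedSpace ℂ X]
    [NormedAddCommGroup Y] [NormedSpace ℂ Y] (s : Finset ι)
    {f : ι → (X →L[ℂ] Y)} (hf : ∀ i ∈ s, IsCompactOperator (f i)) :
    IsCompactOperator (⇑(∑ i ∈ s, f i)) := by
  classical
  induction s using Finset.induction_on with
  | empty => simpa using isCompactOperator_zero
  | @insert a s ha ih =>
    rw [Finset.sum_insert ha]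
    have h2 := (hf a (Finset.mem_insert_self a s)).add
      (ih (fun i hi => hf i (Finset.mem_insert_of_mem hi)))
    rwa [← ContinuousLinearMap.coe_add'] at h2

lemma mulOp_eq_sum_finite [DecidableEq π] (G : π → Matrix (Fin n) (Fin n) ℂ) (C : ℝ)
    (hC : ∀ g, ‖G g‖ ≤ C) (T : Finset π) (hG : ∀ g ∉ T, G g = 0) :
    mulOp G C hC = ∑ t ∈ T, (singleCLM t).comp ((matCLM (G t)).comp (evalCLM t)) := by
  apply ContinuousLinearMap.ext; intro ξ
  apply lp.ext; funext g
  rw [ContinuousLinearMap.sum_apply, lp.coeFn_sum, Finset.sum_apply]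
  simp only [ContinuousLinearMap.comp_apply, singleCLM_apply, matCLM_apply, evalCLM_apply]
  rw [show mulOp G C hC ξ g = (EuclideanSpace.equiv (Fin n) ℂ).symm ((G g).mulVec (ξ g)) from rfl]
  by_cases hg : g ∈ T
  · symm
    refine (Finset.sum_eq_single_of_mem g hg ?_).trans (lp.single_apply_self 2 g _)
    intro t _ ht
    exact lp.single_apply_ne 2 t _ (Ne.symm ht)
  · rw [hG g hg, Matrix.zero_mulVec, map_zero]
    symm
    refine Finset.sum_eq_zero ?_
    intro t ht
    exact lp.single_apply_ne 2 t _ (fun h : g = t => hg (h.symm ▸ ht))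

lemma isCompactOperator_mulOp_of_finite (G : π → Matrix (Fin n) (Fin n) ℂ) (C : ℝ)
    (hC : ∀ g, ‖G g‖ ≤ C) (T : Finset π) (hG : ∀ g ∉ T, G g = 0) :
    IsCompactOperator (mulOp G C hC) := by
  classical
  rw [mulOp_eq_sum_finite G C hC T hG]
  apply isCompactOperator_sum
  intro t _
  have h1 : IsCompactOperator (evalCLM (n := n) t) :=
    isCompactOperator_of_finiteDimensional _
  have h2 : IsCompactOperator
      (⇑((singleCLM t).comp (matCLM (G t))) ∘ ⇑(evalCLM (n := n) t)) :=
    h1.continuous_comp ((singleCLM t).comp (matCLM (G t))).continuous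
  have : (singleCLM t).comp ((matCLM (G t)).comp (evalCLM t)) =
      ((singleCLM t).comp (matCLM (G t))).comp (evalCLM t) :=
    (ContinuousLinearMap.comp_assoc _ _ _).symm
  rw [this, ContinuousLinearMap.coe_comp']
  exact h2

lemma isCompactOperator_mulOp_of_vanishing (G : π → Matrix (Fin n) (Fin n) ℂ) (C : ℝ)
    (hC : ∀ g, ‖G g‖ ≤ C)
    (hv : ∀ ε : ℝ, 0 < ε → {g : π | ε ≤ ‖G g‖}.Finite) :
    IsCompactOperator (mulOp G C hC) := by
  classical
  have hC0 : 0 ≤ C := le_trans (norm_nonneg _) (hC 1)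
  set Gn : ℕ → (π → Matrix (Fin n) (Fin n) ℂ) :=
    fun m g => if (1 : ℝ) / (m + 1) ≤ ‖G g‖ then G g else 0 with hGn_def
  have hGn : ∀ m g, ‖Gn m g‖ ≤ C := by
    intro m g
    simp only [Gn]
    split
    · exact hC g
    · simpa using hC0
  set Fm : ℕ → (_ →L[ℂ] _) := fun m => mulOp (Gn m) C (hGn m) with hFm_def
  have hcpt : ∀ m, IsCompactOperator (Fm m) := by
    intro m
    apply isCompactOperator_mulOp_of_finite _ _ _
      (hv ((1 : ℝ) / (m + 1)) (by positivity)).toFinset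
    intro g hg
    rw [Set.Finite.mem_toFinset, Set.mem_setOf_eq] at hg
    simp only [Gn]
    rw [if_neg hg]
  have hdiff : ∀ m : ℕ, ‖mulOp G C hC - Fm m‖ ≤ 1 / (m + 1) := by
    intro m
    have hsub : ∀ g, ‖G g - Gn m g‖ ≤ C + C := fun g =>
      (norm_sub_le _ _).trans (add_le_add (hC g) (hGn m g))
    have heq : mulOp G C hC - Fm m = mulOp (fun g => G g - Gn m g) (C + C) hsub := by
      apply eq_mulOp
      intro ξ g
      rw [ContinuousLinearMap.sub_apply, lp.coeFn_sub, Pi.sub_apply, WithLp.ofLp_sub,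
        mulOp_apply, hFm_def]
      rw [mulOp_apply, ← Matrix.sub_mulVec]
    rw [heq]
    apply mulOp_opNorm_le _ _ _ (by positivity)
    intro g
    simp only [Gn]
    split
    · simp only [sub_self, norm_zero]
      positivity
    · rw [sub_zero]
      next h => exact (not_le.mp h).le
  have htend : Filter.Tendsto Fm Filter.atTop (nhds (mulOp G C hC)) := by
    rw [tendsto_iff_norm_sub_tendsto_zero]
    apply squeeze_zero (g := fun m : ℕ => 1 / (m + 1 : ℝ)) (fun m => norm_nonneg _)
      (fun m => by rw [norm_sub_rev]; exact hdiff m)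
    exact tendsto_one_div_add_atTop_nhds_zero_nat
  exact isCompactOperator_of_tendsto htend (Filter.Eventually.of_forall hcpt)


end CCFAux


open CCFAux in
set_option maxHeartbeats 1000000 in

/-- If `F : π → Matrix (Fin n) (Fin n) ℂ` is bounded and satisfies conditions
(1.4) and (1.5), then every convex combination `Φ_x = Σ_k λ_k L_{h_k} Φ_F L_{h_k}⁻¹`
(a member of the equivariant family (1.9)) differs from `Φ_F` by a compact operator and
is invertible modulo compact operators, i.e. is a Fredholm operator. -/
theorem convex_combination_fredholm
    {π : Type*} [Group π] {n : ℕ}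
    (F : π → Matrix (Fin n) (Fin n) ℂ)
    (hbd : ∃ C : ℝ, ∀ g : π, ‖F g‖ ≤ C)
    (h14 : ∃ (S : Finset π) (C : ℝ), 0 < C ∧
      ∀ g ∉ S, IsUnit (F g) ∧ ‖(F g)⁻¹‖ ≤ C)
    (h15 : ∀ h : π, ∀ ε : ℝ, 0 < ε → {g : π | ε ≤ ‖F (h * g) - F g‖}.Finite)
    (Φ : lp (fun _ : π => EuclideanSpace ℂ (Fin n)) 2 →L[ℂ]
         lp (fun _ : π => EuclideanSpace ℂ (Fin n)) 2)
    (hΦ : ∀ (ξ : lp (fun _ : π => EuclideanSpace ℂ (Fin n)) 2) (g : π),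
      Φ ξ g = (F g).mulVec (ξ g))
    (L : π → (lp (fun _ : π => EuclideanSpace ℂ (Fin n)) 2 →L[ℂ]
              lp (fun _ : π => EuclideanSpace ℂ (Fin n)) 2))
    (hL : ∀ (h : π) (ξ : lp (fun _ : π => EuclideanSpace ℂ (Fin n)) 2) (g : π),
      L h ξ g = ξ (h⁻¹ * g)) :
    ∀ (m : ℕ) (h : Fin (m + 1) → π) (lam : Fin (m + 1) → ℝ),
      (∀ k, 0 ≤ lam k) → (∑ k, lam k = 1) →
      IsCompactOperator
        ((∑ k, (lam k : ℂ) • (L (h k) ∘L Φ ∘L L (h k)⁻¹)) - Φ) ∧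
      ∃ Ψ : lp (fun _ : π => EuclideanSpace ℂ (Fin n)) 2 →L[ℂ]
            lp (fun _ : π => EuclideanSpace ℂ (Fin n)) 2,
        IsCompactOperator
          ((∑ k, (lam k : ℂ) • (L (h k) ∘L Φ ∘L L (h k)⁻¹)) ∘L Ψ -
            ContinuousLinearMap.id ℂ (lp (fun _ : π => EuclideanSpace ℂ (Fin n)) 2)) ∧
        IsCompactOperator
          (Ψ ∘L (∑ k, (lam k : ℂ) • (L (h k) ∘L Φ ∘L L (h k)⁻¹)) -
            ContinuousLinearMap.id ℂ (lp (fun _ : π => EuclideanSpace ℂ (Fin n)) 2)) := by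
  classical
  intro m h lam hlam hsum
  obtain ⟨C₀, hC₀⟩ := hbd
  have hC₀0 : 0 ≤ C₀ := le_trans (norm_nonneg _) (hC₀ 1)
  obtain ⟨S, C, hCpos, hS⟩ := h14
  set A := ∑ k, (lam k : ℂ) • (L (h k) ∘L Φ ∘L L (h k)⁻¹) with hA
  have hGkbd : ∀ k : Fin (m+1), ∀ g : π, ‖F ((h k)⁻¹ * g) - F g‖ ≤ C₀ + C₀ :=
    fun k g => (norm_sub_le _ _).trans (add_le_add (hC₀ _) (hC₀ _))
  have hXk : ∀ k : Fin (m+1), (L (h k) ∘L Φ ∘L L (h k)⁻¹) - Φ =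
      mulOp (fun g => F ((h k)⁻¹ * g) - F g) (C₀ + C₀) (hGkbd k) := by
    intro k
    apply eq_mulOp
    intro ξ g
    have harg : ((h k)⁻¹)⁻¹ * ((h k)⁻¹ * g) = g := by group
    rw [ContinuousLinearMap.sub_apply, lp.coeFn_sub, Pi.sub_apply, WithLp.ofLp_sub,
      ContinuousLinearMap.comp_apply, ContinuousLinearMap.comp_apply,
      hL (h k) _ g, hΦ _ ((h k)⁻¹ * g), hL (h k)⁻¹ ξ ((h k)⁻¹ * g), harg,
      hΦ ξ g, Matrix.sub_mulVec]
  have hsumC : (∑ k, (lam k : ℂ)) = 1 := by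
    rw [← Complex.ofReal_sum, hsum, Complex.ofReal_one]
  have keydiff : A - Φ = ∑ k, (lam k : ℂ) • ((L (h k) ∘L Φ ∘L L (h k)⁻¹) - Φ) := by
    simp only [smul_sub]
    rw [Finset.sum_sub_distrib, ← Finset.sum_smul, hsumC, one_smul, hA]
  have key : IsCompactOperator (⇑(A - Φ)) := by
    rw [keydiff]
    apply isCompactOperator_sum
    intro k _
    have hD : IsCompactOperator (⇑((L (h k) ∘L Φ ∘L L (h k)⁻¹) - Φ)) := by
      rw [hXk k]
      exact isCompactOperator_mulOp_of_vanishing _ _ _ (fun ε hε => h15 (h k)⁻¹ ε hε)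
    have h2 := hD.smul ((lam k : ℂ))
    rwa [← ContinuousLinearMap.coe_smul'] at h2
  refine ⟨key, ?_⟩
  set G' : π → Matrix (Fin n) (Fin n) ℂ := fun g => if g ∈ S then 0 else (F g)⁻¹ with hG'def
  have hG' : ∀ g, ‖G' g‖ ≤ C := by
    intro g
    simp only [G']
    split
    · simpa using hCpos.le
    · next hgS => exact (hS g hgS).2
  refine ⟨mulOp G' C hG', ?_, ?_⟩
  · -- A ∘L Ψ - id
    have hE1bd : ∀ g, ‖F g * G' g - 1‖ ≤ C₀ * C + ‖(1 : Matrix (Fin n) (Fin n) ℂ)‖ := by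
      intro g
      refine (norm_sub_le _ _).trans (add_le_add ?_ le_rfl)
      exact (Matrix.l2_opNorm_mul _ _).trans
        (mul_le_mul (hC₀ g) (hG' g) (norm_nonneg _) hC₀0)
    have hE1supp : ∀ g ∉ S, F g * G' g - 1 = 0 := by
      intro g hg
      simp only [G']
      rw [if_neg hg,
        Matrix.mul_nonsing_inv _ ((Matrix.isUnit_iff_isUnit_det _).mp (hS g hg).1), sub_self]
    have hΦΨ : Φ ∘L mulOp G' C hG' -
        ContinuousLinearMap.id ℂ (lp (fun _ : π => EuclideanSpace ℂ (Fin n)) 2) =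
        mulOp (fun g => F g * G' g - 1) (C₀ * C + ‖(1 : Matrix (Fin n) (Fin n) ℂ)‖) hE1bd := by
      apply eq_mulOp
      intro ξ g
      rw [ContinuousLinearMap.sub_apply, lp.coeFn_sub, Pi.sub_apply, WithLp.ofLp_sub,
        ContinuousLinearMap.comp_apply, hΦ (mulOp G' C hG' ξ) g, mulOp_apply,
        Matrix.mulVec_mulVec, ContinuousLinearMap.id_apply,
        Matrix.sub_mulVec, Matrix.one_mulVec]
    have hcpt1 : IsCompactOperator (⇑(Φ ∘L mulOp G' C hG' -
        ContinuousLinearMap.id ℂ (lp (fun _ : π => EuclideanSpace ℂ (Fin n)) 2))) := by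
      rw [hΦΨ]
      exact isCompactOperator_mulOp_of_finite _ _ _ S hE1supp
    have hdec : A ∘L mulOp G' C hG' -
        ContinuousLinearMap.id ℂ (lp (fun _ : π => EuclideanSpace ℂ (Fin n)) 2) =
        (A - Φ) ∘L mulOp G' C hG' + (Φ ∘L mulOp G' C hG' -
          ContinuousLinearMap.id ℂ (lp (fun _ : π => EuclideanSpace ℂ (Fin n)) 2)) := by
      rw [ContinuousLinearMap.sub_comp]; abel
    rw [hdec]
    have h1 : IsCompactOperator (⇑((A - Φ) ∘L mulOp G' C hG')) := by
      rw [ContinuousLinearMap.coe_comp']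
      exact key.comp_clm (mulOp G' C hG')
    have h2 := h1.add hcpt1
    rwa [← ContinuousLinearMap.coe_add'] at h2
  · -- Ψ ∘L A - id
    have hE2bd : ∀ g, ‖G' g * F g - 1‖ ≤ C * C₀ + ‖(1 : Matrix (Fin n) (Fin n) ℂ)‖ := by
      intro g
      refine (norm_sub_le _ _).trans (add_le_add ?_ le_rfl)
      exact (Matrix.l2_opNorm_mul _ _).trans
        (mul_le_mul (hG' g) (hC₀ g) (norm_nonneg _) hCpos.le)
    have hE2supp : ∀ g ∉ S, G' g * F g - 1 = 0 := by
      intro g hg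
      simp only [G']
      rw [if_neg hg,
        Matrix.nonsing_inv_mul _ ((Matrix.isUnit_iff_isUnit_det _).mp (hS g hg).1), sub_self]
    have hΨΦ : mulOp G' C hG' ∘L Φ -
        ContinuousLinearMap.id ℂ (lp (fun _ : π => EuclideanSpace ℂ (Fin n)) 2) =
        mulOp (fun g => G' g * F g - 1) (C * C₀ + ‖(1 : Matrix (Fin n) (Fin n) ℂ)‖) hE2bd := by
      apply eq_mulOp
      intro ξ g
      rw [ContinuousLinearMap.sub_apply, lp.coeFn_sub, Pi.sub_apply, WithLp.ofLp_sub,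
        ContinuousLinearMap.comp_apply, mulOp_apply, hΦ ξ g,
        Matrix.mulVec_mulVec, ContinuousLinearMap.id_apply,
        Matrix.sub_mulVec, Matrix.one_mulVec]
    have hcpt2 : IsCompactOperator (⇑(mulOp G' C hG' ∘L Φ -
        ContinuousLinearMap.id ℂ (lp (fun _ : π => EuclideanSpace ℂ (Fin n)) 2))) := by
      rw [hΨΦ]
      exact isCompactOperator_mulOp_of_finite _ _ _ S hE2supp
    have hdec : mulOp G' C hG' ∘L A -
        ContinuousLinearMap.id ℂ (lp (fun _ : π => EuclideanSpace ℂ (Fin n)) 2) =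
        mulOp G' C hG' ∘L (A - Φ) + (mulOp G' C hG' ∘L Φ -
          ContinuousLinearMap.id ℂ (lp (fun _ : π => EuclideanSpace ℂ (Fin n)) 2)) := by
      rw [ContinuousLinearMap.comp_sub]; abel
    rw [hdec]
    have h1 : IsCompactOperator (⇑(mulOp G' C hG' ∘L (A - Φ))) := by
      rw [ContinuousLinearMap.coe_comp']
      exact key.clm_comp (mulOp G' C hG')
    have h2 := h1.add hcpt2
    rwa [← ContinuousLinearMap.coe_add'] at h2
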